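/- Let A be a 2×2 complex matrix with determinant 1 and let n ≥ 1 be a natural number. If the trace of Aⁿ is an algebraic integer (i.e., integral over ℤ), then the trace of A is an algebraic integer. -/

import Mathlib

private lemma cayley2 (A : Matrix (Fin 2) (Fin 2) ℂ) (hA : A.det = 1) :
    A ^ 2 = A.trace • A - 1 := by
  rw [Matrix.det_fin_two] at hA
  rw [← Matrix.ext_iff]
  simp only [Fin.forall_fin_two, pow_two, Matrix.mul_apply, Fin.sum_univ_two,
    Matrix.trace_fin_two, Matrix.sub_apply, Matrix.smul_apply, Matrix.one_apply,
    smul_eq_mul]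
  norm_num
  exact ⟨⟨by linear_combination -hA, by linear_combination⟩,
    by linear_combination, by linear_combination -hA⟩

private lemma trace_pow_eq (A : Matrix (Fin 2) (Fin 2) ℂ) (hA : A.det = 1)
    (l : ℂ) (hl : l ^ 2 - A.trace * l + 1 = 0) (k : ℕ) :
    (A ^ k).trace = l ^ k + (A.trace - l) ^ k := by
  set t := A.trace with ht
  set m := t - l with hm
  have hml : m ^ 2 - t * m + 1 = 0 := by simp only [hm]; linear_combination hl
  have key : ∀ k : ℕ, (A ^ k).trace = l ^ k + m ^ k ∧
      (A ^ (k + 1)).trace = l ^ (k + 1) + m ^ (k + 1) := by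
    intro k
    induction k with
    | zero =>
      constructor
      · simp [Matrix.trace_one]; norm_num
      · simp [hm]; exact ht.symm
    | succ k ih =>
      refine ⟨ih.2, ?_⟩
      have hrec : A ^ (k + 2) = t • A ^ (k + 1) - A ^ k := by
        have : A ^ (k + 2) = A ^ k * A ^ 2 := pow_add A k 2
        rw [this, cayley2 A hA, ← ht, Matrix.mul_sub, mul_one, Matrix.mul_smul,
          ← pow_succ]
      rw [show k + 1 + 1 = k + 2 from rfl, hrec, Matrix.trace_sub, Matrix.trace_smul,
        ih.1, ih.2, smul_eq_mul]
      have e1 : l ^ (k + 2) = l ^ k * (t * l - 1) := by ring_nf; linear_combination l ^ k * hl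
      have e2 : m ^ (k + 2) = m ^ k * (t * m - 1) := by ring_nf; linear_combination m ^ k * hml
      rw [e1, e2]; ring
  exact (key k).1

theorem stmt_3 (A : Matrix (Fin 2) (Fin 2) ℂ) (hA : A.det = 1) (n : ℕ)
    (hn : 1 ≤ n) (h : IsIntegral ℤ (A ^ n).trace) :
    IsIntegral ℤ A.trace := by
  -- pick a root of X² - tX + 1
  obtain ⟨l, hl⟩ : ∃ l : ℂ, l ^ 2 - A.trace * l + 1 = 0 := by
    obtain ⟨z, hz⟩ := Complex.exists_root (f := Polynomial.X ^ 2 -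
        Polynomial.C A.trace * Polynomial.X + 1) (by
      have hd : (Polynomial.X ^ 2 - Polynomial.C A.trace * Polynomial.X + 1 : Polynomial ℂ).degree
          = 2 := by compute_degree!
      rw [hd]; norm_num)
    exact ⟨z, by simpa [Polynomial.IsRoot] using hz⟩
  have hm : ∃ m : ℂ, m = A.trace - l := ⟨_, rfl⟩
  obtain ⟨m, hm⟩ := hm
  have hlm : l * m = 1 := by simp only [hm]; linear_combination -hl
  have htr := trace_pow_eq A hA l hl n
  rw [← hm] at htr
  -- l^n is integral: root of X² - sX + 1 with s = trace(A^n) integral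
  have hlmn : l ^ n * m ^ n = 1 := by rw [← mul_pow, hlm, one_pow]
  have hln : IsIntegral ℤ (l ^ n) := by
    have hint : IsIntegral (integralClosure ℤ ℂ) (l ^ n) := by
      refine ⟨Polynomial.X ^ 2 - Polynomial.C ⟨(A ^ n).trace, h⟩ * Polynomial.X + 1, ?_, ?_⟩
      · monicity!
      · have hcoe : (algebraMap (integralClosure ℤ ℂ) ℂ) ⟨(A ^ n).trace, h⟩
            = (A ^ n).trace := rfl
        simp only [Polynomial.eval₂_add, Polynomial.eval₂_sub, Polynomial.eval₂_mul,
          Polynomial.eval₂_pow, Polynomial.eval₂_X, Polynomial.eval₂_C, Polynomial.eval₂_one,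
          hcoe]
        rw [htr]
        linear_combination -hlmn
    exact isIntegral_trans _ hint
  have hl' : IsIntegral ℤ l := hln.of_pow (by omega)
  have hmn : IsIntegral ℤ (m ^ n) := by
    have : m ^ n = (A ^ n).trace - l ^ n := by rw [htr]; ring
    rw [this]; exact h.sub hln
  have hm' : IsIntegral ℤ m := hmn.of_pow (by omega)
  have : A.trace = l + m := by rw [hm]; ring
  rw [this]; exact hl'.add hm'
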